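/- Assume that for every y ∈ Y the preimage h^{-1}{y} is a finite indexed set of at most M elements. Then for every k, every r ∈ ℝ^M, and every y ∈ Y, the value-iteration functions satisfy V_k(r, y) ≤ V_k(0, y) + max_{i=1,...,M} r^i. -/

import Mathlib

open scoped BigOperators

noncomputable section

variable {X U W Y : Type*}

/-- The worst-case history `ρ_t(x, y_{0:t-1}, u_{0:t-1})`: the supremum (in `ℝ ∪ {-∞}`,
with `sSup ∅ = ⊥`) of accumulated stage costs over all disturbance sequences and initial
states whose trajectory reaches `x` at time `t` and is consistent with the measurements. -/
noncomputable def rho (f : X → U → W → X) (h : X → Y) (l : X → U → W → ℝ)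
    (t : ℕ) (x : X) (ys : ℕ → Y) (us : ℕ → U) : EReal :=
  sSup { c : EReal | ∃ (xs : ℕ → X) (ws : ℕ → W),
    xs t = x ∧
    (∀ τ < t, xs (τ + 1) = f (xs τ) (us τ) (ws τ)) ∧
    (∀ τ < t, h (xs τ) = ys τ) ∧
    c = ((∑ τ ∈ Finset.range t, l (xs τ) (us τ) (ws τ) : ℝ) : EReal) }

/-- Inputs generated causally by a strategy `π` from a measurement sequence:
`u_t = μ_t(y_{0:t}, u_{0:t-1})`. -/
noncomputable def inputsOf (π : ℕ → List Y → List U → U) (ys : ℕ → Y) : ℕ → U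
  | t => π t ((List.range (t + 1)).map ys) (List.ofFn fun i : Fin t => inputsOf π ys i)
  decreasing_by exact i.isLt

/-- Closed loop: state, list of past measurements and list of past inputs. -/
noncomputable def loop (f : X → U → W → X) (h : X → Y)
    (π : ℕ → List Y → List U → U) (x0 : X) (ws : ℕ → W) : ℕ → X × List Y × List U
  | 0 => (x0, [h x0], [])
  | t + 1 =>
    let p := loop f h π x0 ws t
    let u := π t p.2.1 p.2.2
    let x' := f p.1 u (ws t)
    (x', p.2.1 ++ [h x'], p.2.2 ++ [u])

/-- Closed-loop state `x_t`. -/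
noncomputable def cstate (f : X → U → W → X) (h : X → Y)
    (π : ℕ → List Y → List U → U) (x0 : X) (ws : ℕ → W) (t : ℕ) : X :=
  (loop f h π x0 ws t).1

/-- Closed-loop input `u_t = μ_t(y_{0:t}, u_{0:t-1})`. -/
noncomputable def cinput (f : X → U → W → X) (h : X → Y)
    (π : ℕ → List Y → List U → U) (x0 : X) (ws : ℕ → W) (t : ℕ) : U :=
  π t (loop f h π x0 ws t).2.1 (loop f h π x0 ws t).2.2

/-- The worst-case `N`-horizon performance `J_π^N(y_0)`. -/
noncomputable def Jcost (f : X → U → W → X) (h : X → Y) (l : X → U → W → ℝ)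
    (π : ℕ → List Y → List U → U) (N : ℕ) (y0 : Y) : EReal :=
  sSup { c : EReal | ∃ (x0 : X) (ws : ℕ → W), h x0 = y0 ∧
    c = ((∑ t ∈ Finset.range (N + 1),
      l (cstate f h π x0 ws t) (cinput f h π x0 ws t) (ws t) : ℝ) : EReal) }

/-- The information-state update `g` (componentwise), for preimages of `h`
enumerated by `ξ : Y → Fin M → X`. -/
noncomputable def gup {M : ℕ} (f : X → U → W → X) (l : X → U → W → ℝ)
    (ξ : Y → Fin M → X) (r : Fin M → EReal) (ynext y : Y) (u : U) : Fin M → EReal :=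
  fun i => sSup { c : EReal | ∃ (j : Fin M) (w : W),
    ξ ynext i = f (ξ y j) u w ∧ c = (l (ξ y j) u w : EReal) + r j }

/-- The information state `r_t`, defined recursively by `r_0 = 0` and
`r_t = g(r_{t-1}, y_t, y_{t-1}, u_{t-1})`. -/
noncomputable def rvec {M : ℕ} (f : X → U → W → X) (l : X → U → W → ℝ)
    (ξ : Y → Fin M → X) (ys : ℕ → Y) (us : ℕ → U) : ℕ → Fin M → EReal
  | 0 => 0
  | t + 1 => gup f l ξ (rvec f l ξ ys us t) (ys (t + 1)) (ys t) (us t)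

/-- The Bellman operator `B_u V(r, y) = sup_{v ∈ Y} V(g(r, v, y, u), v)`. -/
noncomputable def Bu {M : ℕ} (f : X → U → W → X) (l : X → U → W → ℝ)
    (ξ : Y → Fin M → X) (V : (Fin M → EReal) → Y → EReal) (u : U)
    (r : Fin M → EReal) (y : Y) : EReal :=
  ⨆ v : Y, V (gup f l ξ r v y u) v

/-- The Bellman operator `B V(r, y) = inf_{u ∈ U} B_u V(r, y)`. -/
noncomputable def Bop {M : ℕ} (f : X → U → W → X) (l : X → U → W → ℝ)
    (ξ : Y → Fin M → X) (V : (Fin M → EReal) → Y → EReal)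
    (r : Fin M → EReal) (y : Y) : EReal :=
  ⨅ u : U, Bu f l ξ V u r y

/-- The value iteration `V_0(r, y) = max_i r^i`, `V_{k+1} = B V_k`. -/
noncomputable def Vseq {M : ℕ} (f : X → U → W → X) (l : X → U → W → ℝ)
    (ξ : Y → Fin M → X) : ℕ → (Fin M → EReal) → Y → EReal
  | 0 => fun r _ => ⨆ i, r i
  | k + 1 => fun r y => Bop f l ξ (Vseq f l ξ k) r y

/-- The (possibly time-varying) information-state feedback policy
`μ_t(y_{0:t}, u_{0:t-1}) = η_t(r_t, y_t)`, where `r_0 = 0` and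
`r_{t+1} = g(r_t, y_{t+1}, y_t, u_t)`. -/
noncomputable def infoStrategyT {M : ℕ} [Nonempty Y] [Nonempty U]
    (f : X → U → W → X) (l : X → U → W → ℝ) (ξ : Y → Fin M → X)
    (η : ℕ → (Fin M → EReal) → Y → U) : ℕ → List Y → List U → U :=
  fun t ysl usl =>
    η t (rvec f l ξ (fun τ => ysl.getD τ (Classical.arbitrary Y))
          (fun τ => usl.getD τ (Classical.arbitrary U)) (ysl.length - 1))
      (ysl.getD (ysl.length - 1) (Classical.arbitrary Y))

/-- Stationary information-state feedback policy `μ_t(y_{0:t}, u_{0:t-1}) = η(r_t, y_t)`. -/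
noncomputable def infoStrategy {M : ℕ} [Nonempty Y] [Nonempty U]
    (f : X → U → W → X) (l : X → U → W → ℝ) (ξ : Y → Fin M → X)
    (η : (Fin M → EReal) → Y → U) : ℕ → List Y → List U → U :=
  infoStrategyT f l ξ (fun _ => η)

end


private lemma ereal_le_add_iff {a b : EReal} (c : ℝ) : a ≤ b + (c : EReal) ↔ a - (c : EReal) ≤ b :=
  (EReal.sub_le_iff_le_add (.inl (EReal.coe_ne_bot c)) (.inl (EReal.coe_ne_top c))).symm

private lemma ereal_iInf_add_le {ι : Sort*} [Nonempty ι] (a : ι → EReal) (c : ℝ) :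
    (⨅ u, a u + (c : EReal)) ≤ (⨅ u, a u) + (c : EReal) := by
  rw [ereal_le_add_iff]
  refine le_iInf fun u => ?_
  rw [← ereal_le_add_iff]
  exact iInf_le _ u

private lemma Vseq_shift {X U W Y : Type*} [Nonempty U] [Nonempty Y] {M : ℕ}
    (f : X → U → W → X) (l : X → U → W → ℝ) (ξ : Y → Fin M → X) (c : ℝ) :
    ∀ (k : ℕ) (r s : Fin M → EReal), (∀ i, r i ≤ s i + (c : EReal)) → ∀ y : Y,
      Vseq f l ξ k r y ≤ Vseq f l ξ k s y + (c : EReal)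
  | 0, r, s, hrs, y => by
      simpa only [Vseq] using
        iSup_le fun i => (hrs i).trans (add_le_add_left (le_iSup _ i) _)
  | k + 1, r, s, hrs, y => by
      simp only [Vseq, Bop, Bu]
      refine le_trans (iInf_mono fun u => ?_) (ereal_iInf_add_le _ c)
      refine iSup_le fun v => le_trans ?_ (add_le_add_left (le_iSup _ v) _)
      refine Vseq_shift f l ξ c k _ _ (fun i => ?_) v
      refine sSup_le ?_
      rintro _ ⟨j, w, hx, rfl⟩
      calc (l (ξ y j) u w : EReal) + r j
          ≤ (l (ξ y j) u w : EReal) + (s j + (c : EReal)) := add_le_add_right (hrs j) _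
        _ = ((l (ξ y j) u w : EReal) + s j) + (c : EReal) := (add_assoc _ _ _).symm
        _ ≤ gup f l ξ s v y u i + (c : EReal) := by
              refine add_le_add_left (le_sSup ?_) _
              exact ⟨j, w, hx, rfl⟩

private lemma Vseq_bot_of_M_zero {X U W Y : Type*} [Nonempty U] [Nonempty Y]
    (f : X → U → W → X) (l : X → U → W → ℝ) (ξ : Y → Fin 0 → X) :
    ∀ (k : ℕ) (r : Fin 0 → EReal) (y : Y), Vseq f l ξ k r y = ⊥
  | 0, r, y => by simp [Vseq]
  | k + 1, r, y => by
      simp [Vseq, Bop, Bu, Vseq_bot_of_M_zero f l ξ k]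

/-- Under the finite-preimage assumption, for every `k`, every real
vector `r ∈ ℝ^M` and every `y ∈ Y`, `V_k(r, y) ≤ V_k(0, y) + max_i r^i`. -/
theorem Vseq_le_Vseq_zero_add_max {X U W Y : Type*} [Nonempty X] [Nonempty U] [Nonempty W]
    [Nonempty Y] {M : ℕ} (f : X → U → W → X) (h : X → Y)
    (hsurj : Function.Surjective h) (l : X → U → W → ℝ) (ξ : Y → Fin M → X)
    (hξ : ∀ y : Y, Set.range (ξ y) = {x : X | h x = y})
    (k : ℕ) (r : Fin M → ℝ) (y : Y) :
    Vseq f l ξ k (fun i => ((r i : ℝ) : EReal)) y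
      ≤ Vseq f l ξ k 0 y + ⨆ i : Fin M, ((r i : ℝ) : EReal) := by
  rcases Nat.eq_zero_or_pos M with hM | hM
  · subst hM
    simp [Vseq_bot_of_M_zero f l ξ k]
  · have : Nonempty (Fin M) := Fin.pos_iff_nonempty.mp hM
    obtain ⟨i0, hi0⟩ := Finite.exists_max r
    have h1 : ∀ i : Fin M, ((r i : ℝ) : EReal) ≤ (0 : Fin M → EReal) i + ((r i0 : ℝ) : EReal) := by
      intro i
      simp only [Pi.zero_apply, zero_add, EReal.coe_le_coe_iff]
      exact hi0 i
    refine (Vseq_shift f l ξ (r i0) k _ 0 h1 y).trans ?_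
    exact add_le_add_right (le_iSup (fun i => ((r i : ℝ) : EReal)) i0) _
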